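/- Let P be a prime. Then every square submatrix of the P×P Fourier matrix W_P = (e^{2πi nm/P})_{n,m=0}^{P−1} has nonzero determinant (Chebotarev's theorem on roots of unity). -/

import Mathlib

section ChebAux

open Polynomial

variable {T : Type*} [CommRing T]

lemma theta_shift (s : ℕ) (q : T[X]) (h : (X - 1) ^ (s + 1) ∣ q) :
    (X - 1) ^ s ∣ X * derivative q := by
  obtain ⟨u, rfl⟩ := h
  rw [derivative_mul, derivative_pow, derivative_sub, derivative_X, derivative_one, sub_zero,
    mul_one, Nat.add_sub_cancel]
  exact ⟨X * (C ((s : T) + 1) * u + (X - 1) * derivative u), by push_cast; ring⟩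

lemma theta_monomial (a : T) (n : ℕ) :
    X * derivative (C a * X ^ n) = C (a * n) * X ^ n := by
  rcases n with _ | n
  · simp
  · rw [derivative_C_mul_X_pow]
    push_cast
    ring_nf

lemma theta_sum (k : ℕ) (b : Fin k → T) (c : Fin k → ℕ) (m : ℕ) :
    (fun q : T[X] => X * derivative q)^[m] (∑ j, C (b j) * X ^ (c j)) =
      ∑ j, C (b j * (c j : T) ^ m) * X ^ (c j) := by
  induction m with
  | zero => simp
  | succ m ih =>
    rw [Function.iterate_succ_apply', ih]
    rw [derivative_sum, Finset.mul_sum]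
    refine Finset.sum_congr rfl fun j _ => ?_
    rw [theta_monomial]
    ring_nf

lemma moments (k : ℕ) (b : Fin k → T) (c : Fin k → ℕ)
    (h : (X - 1) ^ k ∣ ∑ j, C (b j) * X ^ (c j)) :
    ∀ m, m < k → ∑ j, b j * (c j : T) ^ m = 0 := by
  intro m hm
  have key : ∀ m' ≤ k, (X - 1) ^ (k - m') ∣
      (fun q : T[X] => X * derivative q)^[m'] (∑ j, C (b j) * X ^ (c j)) := by
    intro m' hm'
    induction m' with
    | zero => simpa using h
    | succ n ih =>
      rw [Function.iterate_succ_apply']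
      have h2 := ih (Nat.le_of_succ_le hm')
      have : k - n = (k - (n+1)) + 1 := by omega
      rw [this] at h2
      exact theta_shift _ _ h2
  have h3 := key m (le_of_lt hm)
  rw [theta_sum] at h3
  have h4 : (X - 1 : T[X]) ∣ ∑ j, C (b j * (c j : T) ^ m) * X ^ (c j) :=
    dvd_trans (dvd_pow_self _ (by omega)) h3
  have h5 := Polynomial.eval_dvd (x := (1 : T)) h4
  simp only [eval_sub, eval_one, eval_X, sub_self, zero_dvd_iff] at h5
  rw [Polynomial.eval_finset_sum] at h5
  simpa using h5

open scoped NumberField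

set_option maxHeartbeats 1000000 in
set_option synthInstance.maxHeartbeats 400000 in
theorem cheb_aux (p : ℕ+) (hp : (p : ℕ).Prime) (K : Type*) [Field K] [CharZero K]
    [IsCyclotomicExtension {(p : ℕ)} ℚ K] (ζ : K) (hζ : IsPrimitiveRoot ζ p)
    (k : ℕ) (r c : Fin k → ℕ) (hrlt : ∀ i, r i < p) (hclt : ∀ j, c j < p)
    (hr : Function.Injective r) (hc : Function.Injective c) :
    Matrix.det (Matrix.of fun i j : Fin k => ζ ^ (r i * c j)) ≠ 0 := by
  classical
  haveI := IsCyclotomicExtension.numberField {(p : ℕ)} ℚ K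
  haveI : Fact (p : ℕ).Prime := ⟨hp⟩
  intro hdet
  set R := 𝓞 K
  set ζR : R := hζ.toInteger with hζRdef
  have hζRprim : IsPrimitiveRoot ζR p := hζ.toInteger_isPrimitiveRoot
  set lam : R := ζR - 1 with hlamdef
  have hlam : Prime lam := hζ.zeta_sub_one_prime'
  -- kernel vector over K
  obtain ⟨v, hv0, hMv⟩ := (Matrix.exists_mulVec_eq_zero_iff).2 hdet
  -- clear denominators
  obtain ⟨d, hd⟩ := IsLocalization.exist_integer_multiples_of_finite
    (nonZeroDivisors R) v
  choose a ha using hd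
  have hinj : Function.Injective (algebraMap R K) := IsFractionRing.injective R K
  obtain ⟨j1, hj1'⟩ := Function.ne_iff.1 hv0
  have hj1 : v j1 ≠ 0 := by simpa using hj1'
  have haj1 : a j1 ≠ 0 := by
    intro h0
    have h1 := ha j1
    rw [h0, map_zero] at h1
    have hd0 : algebraMap R K (d : R) ≠ 0 := by
      simpa using fun h => nonZeroDivisors.coe_ne_zero d (hinj (by simpa using h))
    rw [Algebra.smul_def] at h1
    exact hj1 ((mul_eq_zero.1 h1.symm).resolve_left hd0)
  -- equations over R
  have heq : ∀ i, ∑ j, ζR ^ (r i * c j) * a j = 0 := by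
    intro i
    apply hinj
    rw [map_sum, map_zero]
    have h2 : ∀ j, algebraMap R K (ζR ^ (r i * c j) * a j)
        = algebraMap R K (d : R) * (ζ ^ (r i * c j) * v j) := by
      intro j
      rw [map_mul, ha j, Algebra.smul_def, map_pow]
      have : algebraMap R K ζR = ζ := rfl
      rw [this]; ring
    rw [Finset.sum_congr rfl fun j _ => h2 j, ← Finset.mul_sum]
    have h3 : ∑ j, ζ ^ (r i * c j) * v j = 0 := by
      have := congrFun hMv i
      simpa [Matrix.mulVec, dotProduct] using this
    rw [h3, mul_zero]
  -- divide out maximal power of lam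
  have hlamne : lam ≠ 0 := hlam.ne_zero
  haveI : WfDvdMonoid R := IsNoetherianRing.wfDvdMonoid
  have key : ∀ j, ∃ m : ℕ, a j ≠ 0 → (lam ^ m ∣ a j ∧ ¬ lam ^ (m + 1) ∣ a j) := by
    intro j
    by_cases h0 : a j = 0
    · exact ⟨0, fun h => absurd h0 h⟩
    · obtain ⟨m, u, hu, hau⟩ := WfDvdMonoid.max_power_factor h0 hlam.irreducible
      refine ⟨m, fun _ => ⟨⟨u, hau⟩, fun hdvd => hu ?_⟩⟩
      rw [hau, pow_succ] at hdvd
      exact (mul_dvd_mul_iff_left (pow_ne_zero m hlamne)).1 hdvd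
  choose nu hnu using key
  set T : Finset (Fin k) := Finset.univ.filter (fun j => a j ≠ 0) with hT
  have hTne : T.Nonempty := ⟨j1, by simp [hT, haj1]⟩
  obtain ⟨j0, hj0T, hj0min⟩ := T.exists_min_image nu hTne
  have haj0 : a j0 ≠ 0 := (Finset.mem_filter.1 hj0T).2
  set n : ℕ := nu j0 with hn
  have hdvdall : ∀ j, lam ^ n ∣ a j := by
    intro j
    by_cases h0 : a j = 0
    · simp [h0]
    · have hj : j ∈ T := by simp [hT, h0]
      exact dvd_trans (pow_dvd_pow lam (hj0min j hj)) (hnu j h0).1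
  choose b hb using fun j => hdvdall j
  have hbj0 : ¬ lam ∣ b j0 := by
    intro hdvd
    obtain ⟨w, hw⟩ := hdvd
    exact (hnu j0 haj0).2 ⟨w, by rw [hb j0, hw, pow_succ]; ring⟩
  have heqb : ∀ i, ∑ j, ζR ^ (r i * c j) * b j = 0 := by
    intro i
    have h4 : lam ^ n * (∑ j, ζR ^ (r i * c j) * b j) = 0 := by
      rw [Finset.mul_sum]
      rw [← heq i]
      exact Finset.sum_congr rfl fun j _ => by rw [hb j]; ring
    exact (mul_eq_zero.1 h4).resolve_left (pow_ne_zero n hlamne)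
  -- the polynomial
  set f : Polynomial R := ∑ j, C (b j) * X ^ (c j) with hf
  have hfroot : ∀ i : Fin k, f.IsRoot (ζR ^ r i) := by
    intro i
    rw [hf, IsRoot.def, eval_finset_sum]
    rw [← heqb i]
    refine Finset.sum_congr rfl fun j _ => ?_
    rw [eval_mul, eval_C, eval_pow, eval_X, ← pow_mul]
    ring
  have hfne : f ≠ 0 := by
    intro h0
    have hcoeff : f.coeff (c j0) = b j0 := by
      rw [hf, finset_sum_coeff]
      rw [Finset.sum_eq_single j0]
      · simp [coeff_C_mul, coeff_X_pow]
      · intro j _ hjne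
        simp only [coeff_C_mul, coeff_X_pow]
        rw [if_neg (fun h : c j0 = c j => hjne (hc h.symm))]
        ring
      · simp
    rw [h0, coeff_zero] at hcoeff
    exact hbj0 (hcoeff ▸ dvd_zero lam)
  -- factor out the roots
  have hzinj : Function.Injective (fun i : Fin k => ζR ^ r i) := by
    intro i i' h
    exact hr (hζRprim.pow_inj (hrlt i) (hrlt i') h)
  have hs_le : (Finset.univ.val.map (fun i : Fin k => ζR ^ r i)) ≤ f.roots := by
    rw [Multiset.le_iff_count]
    intro x
    by_cases hx : x ∈ Finset.univ.val.map (fun i : Fin k => ζR ^ r i)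
    · have h1 : Multiset.count x (Finset.univ.val.map (fun i : Fin k => ζR ^ r i)) = 1 :=
        Multiset.count_eq_one_of_mem
          (Multiset.Nodup.map hzinj Finset.univ.nodup) hx
      obtain ⟨i, _, rfl⟩ := Multiset.mem_map.1 hx
      rw [h1, Polynomial.count_roots]
      exact (Polynomial.rootMultiplicity_pos hfne).2 (hfroot i)
    · rw [Multiset.count_eq_zero_of_notMem hx]
      exact Nat.zero_le _
  have hproddvd : (∏ i : Fin k, (X - C (ζR ^ r i))) ∣ f := by
    have h1 := Multiset.prod_dvd_prod_of_le
      (Multiset.map_le_map (f := fun a => X - C a) hs_le)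
    rw [Finset.prod_eq_multiset_prod]
    rw [Multiset.map_map] at h1
    exact dvd_trans h1 f.prod_multiset_X_sub_C_dvd
  obtain ⟨g, hg⟩ := hproddvd
  -- reduce mod lam
  set I : Ideal R := Ideal.span {lam} with hI
  haveI : I.IsPrime := (Ideal.span_singleton_prime hlamne).2 hlam
  set pi := Ideal.Quotient.mk I with hpi
  have hpiz : pi ζR = 1 := by
    have : pi lam = 0 := Ideal.Quotient.eq_zero_iff_mem.2
      (Ideal.subset_span (Set.mem_singleton _))
    rw [hlamdef, map_sub, map_one, sub_eq_zero] at this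
    exact this
  have hfmap : (X - 1 : Polynomial (R ⧸ I)) ^ k ∣ ∑ j, C (pi (b j)) * X ^ (c j) := by
    have h1 : f.map pi = ∑ j, C (pi (b j)) * X ^ (c j) := by
      rw [hf, Polynomial.map_sum]
      refine Finset.sum_congr rfl fun j _ => by
        rw [Polynomial.map_mul, Polynomial.map_C, Polynomial.map_pow, Polynomial.map_X]
    have h2 : f.map pi = (X - 1 : Polynomial (R ⧸ I)) ^ k * g.map pi := by
      rw [hg, Polynomial.map_mul, Polynomial.map_prod]
      congr 1
      have h3 : ∀ i ∈ (Finset.univ : Finset (Fin k)),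
          (X - C (ζR ^ r i)).map pi = (X - 1 : Polynomial (R ⧸ I)) := by
        intro i _
        rw [Polynomial.map_sub, Polynomial.map_X, Polynomial.map_C, map_pow, hpiz, one_pow,
          map_one]
      rw [Finset.prod_congr rfl h3, Finset.prod_const, Finset.card_univ, Fintype.card_fin]
    rw [← h1, h2]
    exact Dvd.intro _ rfl
  have hmom := moments k (fun j => pi (b j)) c hfmap
  -- Vandermonde
  set A : Matrix (Fin k) (Fin k) (R ⧸ I) :=
    Matrix.of (fun m j : Fin k => ((c j : ℕ) : R ⧸ I) ^ (m : ℕ)) with hA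
  have hAv : A.mulVec (fun j => pi (b j)) = 0 := by
    funext m
    simp only [Matrix.mulVec, dotProduct]
    rw [Pi.zero_apply, ← hmom m m.2]
    refine Finset.sum_congr rfl fun j _ => ?_
    rw [hA]
    simp only [Matrix.of_apply]
    ring
  have hdetA : A.det • (fun j => pi (b j)) = 0 := by
    have h1 : A.adjugate.mulVec (A.mulVec fun j => pi (b j)) = A.det • (fun j => pi (b j)) := by
      rw [Matrix.mulVec_mulVec, Matrix.adjugate_mul, Matrix.smul_mulVec,
        Matrix.one_mulVec]
    rw [hAv, Matrix.mulVec_zero] at h1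
    exact h1.symm
  have hbj0ne : pi (b j0) ≠ 0 := by
    intro h0
    exact hbj0 (Ideal.mem_span_singleton.1 (Ideal.Quotient.eq_zero_iff_mem.1 h0))
  have hdetA0 : A.det = 0 := by
    have := congrFun hdetA j0
    simp only [Pi.smul_apply, smul_eq_mul, Pi.zero_apply] at this
    exact (mul_eq_zero.1 this).resolve_right hbj0ne
  -- det A as an integer
  set D0 : ℤ := (∏ i : Fin k, ∏ j ∈ Finset.Ioi i, ((c j : ℤ) - (c i : ℤ))) with hD0
  have hdetAD : ((D0 : ℤ) : R ⧸ I) = A.det := by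
    have h1 : A = (Matrix.vandermonde (fun j : Fin k => ((c j : ℕ) : R ⧸ I))).transpose := by
      funext m j
      rw [hA, Matrix.transpose_apply, Matrix.vandermonde_apply, Matrix.of_apply]
    rw [h1, Matrix.det_transpose, Matrix.det_vandermonde, hD0]
    push_cast
    ring
  have hD0I : lam ∣ ((D0 : ℤ) : R) := by
    rw [← Ideal.mem_span_singleton, ← hI, ← Ideal.Quotient.eq_zero_iff_mem]
    have : pi ((D0 : ℤ) : R) = ((D0 : ℤ) : R ⧸ I) := by
      rw [map_intCast]
    rw [this, hdetAD, hdetA0]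
  -- p does not divide D0
  have hpZ : Prime ((p : ℕ) : ℤ) := Nat.prime_iff_prime_int.mp hp
  have hpD0 : ¬ ((p : ℕ) : ℤ) ∣ D0 := by
    intro hdvd
    rw [hD0] at hdvd
    obtain ⟨i, _, hdvd2⟩ := hpZ.exists_mem_finset_dvd hdvd
    obtain ⟨j, hjmem, hdvd3⟩ := hpZ.exists_mem_finset_dvd hdvd2
    have hij : i ≠ j := (Finset.mem_Ioi.1 hjmem).ne'.symm
    have hne : (c j : ℤ) - (c i : ℤ) ≠ 0 := by
      intro h0
      exact hij (hc (by exact_mod_cast sub_eq_zero.1 h0)).symm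
    have h1 : ((p : ℕ) : ℤ) ≤ |(c j : ℤ) - (c i : ℤ)| :=
      Int.le_of_dvd (abs_pos.2 hne) ((dvd_abs _ _).2 hdvd3)
    have h2 : (c j : ℤ) < p := by exact_mod_cast hclt j
    have h3 : (c i : ℤ) < p := by exact_mod_cast hclt i
    have h4 : (0:ℤ) ≤ (c j : ℤ) := Int.natCast_nonneg _
    have h5 : (0:ℤ) ≤ (c i : ℤ) := Int.natCast_nonneg _
    have h6 : |(c j : ℤ) - (c i : ℤ)| < ((p:ℕ) : ℤ) := abs_sub_lt_iff.2 ⟨by omega, by omega⟩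
    omega
  -- lam divides p
  have hlamp : lam ∣ ((p : ℕ) : R) := by
    have hroot : Polynomial.IsRoot (Polynomial.cyclotomic p R) ζR :=
      hζRprim.isRoot_cyclotomic p.pos
    have h1 : (X - C ζR) ∣ Polynomial.cyclotomic p R := dvd_iff_isRoot.2 hroot
    have h2 := Polynomial.eval_dvd (x := (1 : R)) h1
    rw [Polynomial.eval_one_cyclotomic_prime] at h2
    rw [eval_sub, eval_X, eval_C] at h2
    have : lam = -(1 - ζR) := by rw [hlamdef]; ring
    rw [this]
    exact (neg_dvd).2 h2
  -- contradiction via Bezout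
  have hcop : IsCoprime (D0 : ℤ) ((p : ℕ) : ℤ) :=
    ((Prime.coprime_iff_not_dvd hpZ).2 hpD0).symm
  obtain ⟨u, w, huw⟩ := hcop
  have h1 : (u : ℤ) * D0 + w * ((p:ℕ):ℤ) = 1 := huw
  have h2 : ((u : ℤ) : R) * ((D0 : ℤ) : R) + ((w : ℤ) : R) * (((p:ℕ):ℤ) : R) = 1 := by
    rw [← Int.cast_mul, ← Int.cast_mul, ← Int.cast_add, h1, Int.cast_one]
  have hlam1 : lam ∣ (1 : R) := by
    rw [← h2]
    refine dvd_add (Dvd.dvd.mul_left hD0I _) ?_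
    have : (((p:ℕ):ℤ) : R) = ((p:ℕ) : R) := by push_cast; ring
    rw [this]
    exact Dvd.dvd.mul_left hlamp _
  exact hlam.not_unit (isUnit_of_dvd_one hlam1)


end ChebAux



/-- Chebotarev's theorem on roots of unity: Let `P` be prime. Every
square submatrix of the `P×P` Fourier matrix `W_P = (e^{2πi nm/P})` has nonzero
determinant. -/
theorem chebotarev_fourier_minors (P : ℕ) (hP : P.Prime)
    (W : Matrix (Fin P) (Fin P) ℂ)
    (hW : ∀ n m : Fin P, W n m =
      Complex.exp (2 * Real.pi * Complex.I * (n : ℕ) * (m : ℕ) / P))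
    (k : ℕ) (r : Fin k → Fin P) (c : Fin k → Fin P)
    (hr : Function.Injective r) (hc : Function.Injective c) :
    Matrix.det (fun i j => W (r i) (c j)) ≠ 0 := by

  have hP0 : P ≠ 0 := hP.pos.ne'
  set ζC : ℂ := Complex.exp (2 * Real.pi * Complex.I / P) with hζC
  have hζCprim : IsPrimitiveRoot ζC P := Complex.isPrimitiveRoot_exp P hP0
  -- the cyclotomic field
  set q : ℕ+ := ⟨P, hP.pos⟩ with hq
  have hqP : (q : ℕ) = P := rfl
  set K := CyclotomicField q ℚ with hK
  haveI : IsCyclotomicExtension {(q : ℕ)} ℚ K :=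
    CyclotomicField.isCyclotomicExtension (q : ℕ) ℚ
  set ζK : K := IsCyclotomicExtension.zeta q ℚ K with hζK
  have hζKprim : IsPrimitiveRoot ζK q := IsCyclotomicExtension.zeta_spec q ℚ K
  set B : PowerBasis ℚ K := hζKprim.powerBasis ℚ with hB
  have hgen : B.gen = ζK := by rw [hB, IsPrimitiveRoot.powerBasis_gen]
  have hmin : minpoly ℚ B.gen = Polynomial.cyclotomic P ℚ := by
    rw [hgen]
    exact (hζKprim.minpoly_eq_cyclotomic_of_irreducible
      (Polynomial.cyclotomic.irreducible_rat (by exact_mod_cast hP.pos))).symm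
  have hy : Polynomial.aeval ζC (minpoly ℚ B.gen) = 0 := by
    rw [hmin, Polynomial.aeval_def, Polynomial.eval₂_eq_eval_map, Polynomial.map_cyclotomic]
    exact hζCprim.isRoot_cyclotomic hP.pos
  set φ : K →ₐ[ℚ] ℂ := B.lift ζC hy with hφ
  have hφζ : φ ζK = ζC := by rw [hφ, ← hgen, PowerBasis.lift_gen]
  -- rewriting the matrix
  have hWentry : ∀ i j, W (r i) (c j) = ζC ^ (((r i : ℕ)) * ((c j : ℕ))) := by
    intro i j
    rw [hW, hζC, ← Complex.exp_nat_mul]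
    congr 1
    push_cast
    ring
  have hdet : Matrix.det (fun i j => W (r i) (c j)) =
      φ (Matrix.det (Matrix.of fun i j : Fin k => ζK ^ ((r i : ℕ) * (c j : ℕ)))) := by
    rw [AlgHom.map_det, AlgHom.mapMatrix_apply]
    congr 1
    funext i j
    rw [Matrix.map_apply, Matrix.of_apply, map_pow, hφζ]
    exact hWentry i j
  rw [hdet]
  intro h0
  have h1 : Matrix.det (Matrix.of fun i j : Fin k => ζK ^ ((r i : ℕ) * (c j : ℕ))) = 0 := by
    apply (map_eq_zero_iff (φ : K →+* ℂ) (RingHom.injective _)).1 h0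
  exact cheb_aux q hP K ζK hζKprim k (fun i => (r i : ℕ)) (fun j => (c j : ℕ))
    (fun i => (r i).isLt) (fun j => (c j).isLt)
    (fun i i' h => hr (Fin.val_injective h)) (fun j j' h => hc (Fin.val_injective h)) h1
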